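/- (Rosenblatt, type (i)) For every integer n ≥ 2 and every integer a with 1 ≤ a ≤ n−1, the four-element subsets A = {0, a, a+n, 2n} and B = {0, a, n, 2n+a} of ℤ_{4n} (elements taken modulo 4n) are homometric: iv(A) = iv(B). -/
import Mathlib


/-- The interval vector of a finite subset `A` of `ℤ_M`:
`iv A n = #{(a, b) ∈ A × A : b - a = n}`. -/
def iv {M : ℕ} (A : Finset (ZMod M)) (n : ZMod M) : ℕ :=
  ((A ×ˢ A).filter (fun p => p.2 - p.1 = n)).card

lemma sum4 {α β : Type*} [DecidableEq α] [AddCommMonoid β] (f : α → β) (p q r s : α)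
    (h1 : p ≠ q) (h2 : p ≠ r) (h3 : p ≠ s) (h4 : q ≠ r) (h5 : q ≠ s) (h6 : r ≠ s) :
    ∑ x ∈ ({p, q, r, s} : Finset α), f x = f p + (f q + (f r + f s)) := by
  rw [Finset.sum_insert (by simp [h1, h2, h3]), Finset.sum_insert (by simp [h4, h5]),
    Finset.sum_insert (by simp [h6]), Finset.sum_singleton]

/-- (Rosenblatt, type (i)) For `n ≥ 2` and `1 ≤ a ≤ n−1`, the sets
`{0, a, a+n, 2n}` and `{0, a, n, 2n+a}` are homometric in `ℤ_{4n}`. -/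
theorem rosenblatt_type_one (n a : ℕ) (hn : 2 ≤ n) (ha1 : 1 ≤ a) (ha2 : a ≤ n - 1) :
    iv ({((0 : ℕ) : ZMod (4 * n)), ((a : ℕ) : ZMod (4 * n)),
          ((a + n : ℕ) : ZMod (4 * n)), ((2 * n : ℕ) : ZMod (4 * n))} : Finset (ZMod (4 * n))) =
      iv ({((0 : ℕ) : ZMod (4 * n)), ((a : ℕ) : ZMod (4 * n)),
          ((n : ℕ) : ZMod (4 * n)), ((2 * n + a : ℕ) : ZMod (4 * n))} : Finset (ZMod (4 * n))) := by
  haveI : NeZero (4 * n) := ⟨by omega⟩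
  have key : ∀ i j : ℕ, i < 4 * n → j < 4 * n → i ≠ j →
      ((i : ZMod (4 * n)) ≠ (j : ZMod (4 * n))) := by
    intro i j hi hj hij h
    exact hij (by rw [← ZMod.val_cast_of_lt hi, ← ZMod.val_cast_of_lt hj, h])
  have ha : a < n := by omega
  have hA01 := key 0 a (by omega) (by omega) (by omega)
  have hA02 := key 0 (a + n) (by omega) (by omega) (by omega)
  have hA03 := key 0 (2 * n) (by omega) (by omega) (by omega)
  have hA12 := key a (a + n) (by omega) (by omega) (by omega)
  have hA13 := key a (2 * n) (by omega) (by omega) (by omega)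
  have hA23 := key (a + n) (2 * n) (by omega) (by omega) (by omega)
  have hB02 := key 0 n (by omega) (by omega) (by omega)
  have hB03 := key 0 (2 * n + a) (by omega) (by omega) (by omega)
  have hB12 := key a n (by omega) (by omega) (by omega)
  have hB13 := key a (2 * n + a) (by omega) (by omega) (by omega)
  have hB23 := key n (2 * n + a) (by omega) (by omega) (by omega)
  funext t
  unfold iv
  rw [Finset.card_filter, Finset.card_filter, Finset.sum_product, Finset.sum_product]
  rw [sum4 _ _ _ _ _ hA01 hA02 hA03 hA12 hA13 hA23,
      sum4 _ _ _ _ _ hA01 hA02 hA03 hA12 hA13 hA23,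
      sum4 _ _ _ _ _ hA01 hA02 hA03 hA12 hA13 hA23,
      sum4 _ _ _ _ _ hA01 hA02 hA03 hA12 hA13 hA23,
      sum4 _ _ _ _ _ hA01 hA02 hA03 hA12 hA13 hA23,
      sum4 _ _ _ _ _ hA01 hB02 hB03 hB12 hB13 hB23,
      sum4 _ _ _ _ _ hA01 hB02 hB03 hB12 hB13 hB23,
      sum4 _ _ _ _ _ hA01 hB02 hB03 hB12 hB13 hB23,
      sum4 _ _ _ _ _ hA01 hB02 hB03 hB12 hB13 hB23,
      sum4 _ _ _ _ _ hA01 hB02 hB03 hB12 hB13 hB23]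
  push_cast
  set x := ((a : ℕ) : ZMod (4 * n)) with hx
  set m := ((n : ℕ) : ZMod (4 * n)) with hmm
  clear_value x m
  have h0 : ((4 * n : ℕ) : ZMod (4 * n)) = 0 := ZMod.natCast_self _
  have hm4 : 4 * m = 0 := by rw [hmm, ← h0]; push_cast; ring
  rw [show m - 0 = x + m - x from by ring,
    show 2 * m + x - 0 = x - 2 * m from by linear_combination hm4,
    show m - x = 2 * m - (x + m) from by ring,
    show 2 * m + x - x = 2 * m - 0 from by ring,
    show 0 - m = x - (x + m) from by ring,
    show x - m = x + m - 2 * m from by ring,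
    show m - m = x + m - (x + m) from by ring,
    show 2 * m + x - m = x + m - 0 from by ring,
    show 0 - (2 * m + x) = 2 * m - x from by linear_combination -hm4,
    show x - (2 * m + x) = 0 - 2 * m from by ring,
    show m - (2 * m + x) = 0 - (x + m) from by ring,
    show 2 * m + x - (2 * m + x) = 2 * m - 2 * m from by ring]
  ring
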